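/- Let N ≥ 1 and let g = (g₁,…,g_N) and h = (h₁,…,h_N) be vectors of nonnegative reals. Then the multi-carrier variable-rate secrecy objective ρ ↦ Σ_{r=1}^N ( log(1+g_r·ρ_r) − log(1+min(g_r,h_r)·ρ_r) ) is concave on the nonnegative orthant {ρ ∈ ℝ^N : ρ_r ≥ 0 for all r}. -/

import Mathlib

open Set Real

lemma oneD_concave {a b : ℝ} (ha : 0 ≤ b) (hba : b ≤ a) :
    ConcaveOn ℝ (Set.Ici (0:ℝ))
      (fun x => Real.log (1 + a * x) - Real.log (1 + b * x)) := by
  have ha0 : 0 ≤ a := le_trans ha hba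
  have hpos : ∀ c : ℝ, 0 ≤ c → ∀ x : ℝ, 0 ≤ x → 0 < 1 + c * x := fun c hc x hx => by
    nlinarith
  refine concaveOn_of_hasDerivWithinAt2_nonpos (f' := fun x => a / (1 + a * x) - b / (1 + b * x))
    (f'' := fun x => -(a^2 / (1 + a * x)^2) + b^2 / (1 + b * x)^2)
    (convex_Ici 0) ?_ ?_ ?_ ?_
  · exact ((continuousOn_const.add (continuous_const.mul continuous_id).continuousOn).log
      (fun x hx => ne_of_gt (hpos a ha0 x hx))).sub
      ((continuousOn_const.add (continuous_const.mul continuous_id).continuousOn).log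
      (fun x hx => ne_of_gt (hpos b ha x hx)))
  · intro x hx
    rw [interior_Ici] at hx
    have hax : (0:ℝ) < 1 + a * x := hpos a ha0 x (le_of_lt hx)
    have hbx : (0:ℝ) < 1 + b * x := hpos b ha x (le_of_lt hx)
    have h1 : HasDerivAt (fun x : ℝ => 1 + a * x) a x := by
      simpa using (hasDerivAt_id x).const_mul a |>.const_add 1
    have h2 : HasDerivAt (fun x : ℝ => 1 + b * x) b x := by
      simpa using (hasDerivAt_id x).const_mul b |>.const_add 1
    have := (h1.log hax.ne').sub (h2.log hbx.ne')
    exact this.hasDerivWithinAt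
  · intro x hx
    rw [interior_Ici] at hx
    have hax : (0:ℝ) < 1 + a * x := hpos a ha0 x (le_of_lt hx)
    have hbx : (0:ℝ) < 1 + b * x := hpos b ha x (le_of_lt hx)
    have h1 : HasDerivAt (fun x : ℝ => 1 + a * x) a x := by
      simpa using (hasDerivAt_id x).const_mul a |>.const_add 1
    have h2 : HasDerivAt (fun x : ℝ => 1 + b * x) b x := by
      simpa using (hasDerivAt_id x).const_mul b |>.const_add 1
    have hda : HasDerivAt (fun x : ℝ => a / (1 + a * x)) (a * (-a / (1 + a * x)^2)) x := by
      simpa [div_eq_mul_inv] using (h1.inv hax.ne').const_mul a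
    have hdb : HasDerivAt (fun x : ℝ => b / (1 + b * x)) (b * (-b / (1 + b * x)^2)) x := by
      simpa [div_eq_mul_inv] using (h2.inv hbx.ne').const_mul b
    have := (hda.sub hdb).hasDerivWithinAt (s := interior (Set.Ici (0:ℝ)))
    exact this.congr_deriv (by ring)
  · intro x hx
    rw [interior_Ici] at hx
    have hax : (0:ℝ) < 1 + a * x := hpos a ha0 x (le_of_lt hx)
    have hbx : (0:ℝ) < 1 + b * x := hpos b ha x (le_of_lt hx)
    have key : b / (1 + b * x) ≤ a / (1 + a * x) := by
      rw [div_le_div_iff₀ hbx hax]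
      nlinarith
    have hb' : 0 ≤ b / (1 + b * x) := div_nonneg ha hbx.le
    have : (b / (1 + b * x))^2 ≤ (a / (1 + a * x))^2 := by
      exact pow_le_pow_left₀ hb' key 2
    rw [div_pow, div_pow] at this
    linarith

/-- For `N ≥ 1` and nonnegative channel gain vectors `g, h`, the
multi-carrier variable-rate secrecy objective
`ρ ↦ Σ_r ( log(1+g_r·ρ_r) − log(1+min(g_r,h_r)·ρ_r) )` is concave on the
nonnegative orthant of `ℝ^N`. -/
theorem multicarrier_secrecy_concave (N : ℕ) (hN : 1 ≤ N)
    (g h : Fin N → ℝ) (hg : ∀ r, 0 ≤ g r) (hh : ∀ r, 0 ≤ h r) :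
    ConcaveOn ℝ {ρ : Fin N → ℝ | ∀ r, 0 ≤ ρ r}
      (fun ρ => ∑ r, (Real.log (1 + g r * ρ r)
                      - Real.log (1 + min (g r) (h r) * ρ r))) := by
  have hconv : Convex ℝ {ρ : Fin N → ℝ | ∀ r, 0 ≤ ρ r} := by
    have : {ρ : Fin N → ℝ | ∀ r, 0 ≤ ρ r} = Set.pi Set.univ (fun _ => Set.Ici (0:ℝ)) := by
      ext ρ; simp [Set.mem_pi, Pi.le_def]
    rw [this]
    exact convex_pi fun i _ => convex_Ici 0
  have hterm : ∀ r : Fin N, ConcaveOn ℝ {ρ : Fin N → ℝ | ∀ r, 0 ≤ ρ r}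
      (fun ρ : Fin N → ℝ => Real.log (1 + g r * ρ r)
        - Real.log (1 + min (g r) (h r) * ρ r)) := by
    intro r
    have h1 : ConcaveOn ℝ (Set.Ici (0:ℝ))
        (fun x => Real.log (1 + g r * x) - Real.log (1 + min (g r) (h r) * x)) :=
      oneD_concave (le_min (hg r) (hh r)) (min_le_left _ _)
    have h2 := h1.comp_affineMap ((LinearMap.proj r : (Fin N → ℝ) →ₗ[ℝ] ℝ).toAffineMap)
    refine h2.subset ?_ hconv
    intro ρ hρ
    exact hρ r
  classical
  have heq : (fun ρ : Fin N → ℝ => ∑ r, (Real.log (1 + g r * ρ r)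
      - Real.log (1 + min (g r) (h r) * ρ r)))
      = ∑ r : Fin N, (fun ρ : Fin N → ℝ => Real.log (1 + g r * ρ r)
      - Real.log (1 + min (g r) (h r) * ρ r)) := by
    ext ρ; simp
  rw [heq]
  exact Finset.sum_induction _ (fun f => ConcaveOn ℝ {ρ : Fin N → ℝ | ∀ r, 0 ≤ ρ r} f)
    (fun f₁ f₂ h₁ h₂ => h₁.add h₂) (concaveOn_const 0 hconv) (fun r _ => hterm r)
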